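/- For all integers q ≥ 2 and n ≥ 1, and under each of the scenarios (∗◦), (◦∗), (∗∗), and (•∗), the whole set F_q is n-cell implementable if and only if q ≤ n. -/

import Mathlib

/-- The alphabet 𝔹• = {0, 1, ∗, •}. -/
inductive BB : Type
  | zero
  | one
  | star
  | reject
deriving DecidableEq

instance instFintypeBB : Fintype BB where
  elems := {BB.zero, BB.one, BB.star, BB.reject}
  complete := by
    intro x
    cases x <;> simp

/-- The cell function T : 𝔹• × 𝔹• → 𝔹: T(u,ϑ) = 1 iff u = ∗, or ϑ = ∗,
or u,ϑ ∈ 𝔹 with u = ϑ. -/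
def Tcell : BB → BB → Bool
  | BB.star, _ => true
  | _, BB.star => true
  | BB.zero, BB.zero => true
  | BB.one, BB.one => true
  | _, _ => false

/-- The word-level function T(u,ϑ) = ⋀_{j<n} T(u_j, ϑ_j). -/
def Tword {n : ℕ} (u θ : Fin n → BB) : Bool :=
  decide (∀ j, Tcell (u j) (θ j) = true)

/-- The alphabet 𝔹 = {0,1} ⊆ 𝔹•. -/
def Bcirc : Set BB := {BB.zero, BB.one}

/-- The alphabet 𝔹∗ = {0,1,∗} ⊆ 𝔹•. -/
def Bstar : Set BB := {BB.zero, BB.one, BB.star}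

/-- The full alphabet 𝔹•. -/
def Bdot : Set BB := Set.univ

/-- A family Φ of functions {0,…,q−1} → 𝔹 is n-cell implementable under
scenario (A,B) if there are mappings u : {0,…,q−1} → A^n and ϑ : Φ → B^n
with f(x) = T(u(x), ϑ(f)) for all f ∈ Φ and x. -/
def Implementable (A B : Set BB) (n q : ℕ) (Φ : Set (Fin q → Bool)) : Prop :=
  ∃ u : Fin q → Fin n → BB, ∃ θ : (Fin q → Bool) → Fin n → BB,
    (∀ x j, u x j ∈ A) ∧ (∀ f ∈ Φ, ∀ j, θ f j ∈ B) ∧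
    (∀ f ∈ Φ, ∀ x, f x = Tword (u x) (θ f))

/-- The family 𝓔_q = { x ↦ [x = t] : t ∈ [q⟩ }. -/
def Eset (q : ℕ) : Set (Fin q → Bool) :=
  { f | ∃ t : Fin q, f = fun x => decide (x = t) }

/-- The family 𝓝_q = { x ↦ [x ≠ t] : t ∈ [q⟩ }. -/
def Nset (q : ℕ) : Set (Fin q → Bool) :=
  { f | ∃ t : Fin q, f = fun x => decide (x ≠ t) }

/-- The family 𝓖_q = { x ↦ [x ≥ t] : t ∈ [q⟩ }. -/
def Gset (q : ℕ) : Set (Fin q → Bool) :=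
  { f | ∃ t : Fin q, f = fun x => decide (t ≤ x) }

/-- The family 𝓛_q = { x ↦ [x ≤ t] : t ∈ [q⟩ }. -/
def Lset (q : ℕ) : Set (Fin q → Bool) :=
  { f | ∃ t : Fin q, f = fun x => decide (x ≤ t) }

/-! ### Auxiliary development: abstract cover systems -/

namespace FsetAux

variable {α : Type*} [DecidableEq α]

/-- A block: a pair of "literals" (zero-sets of the two possible binary symbols of a cell). -/
abbrev Blk (α : Type*) := Finset α × Finset α

/-- `Cov l S` : the set `S` is the union of a selection of at most one literal per block of `l`. -/
inductive Cov : List (Blk α) → Finset α → Prop where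
  | nil : Cov [] ∅
  | skip (b : Blk α) (l : List (Blk α)) (S : Finset α) : Cov l S → Cov (b :: l) S
  | left (b : Blk α) (l : List (Blk α)) (S : Finset α) : Cov l S → Cov (b :: l) (S ∪ b.1)
  | right (b : Blk α) (l : List (Blk α)) (S : Finset α) : Cov l S → Cov (b :: l) (S ∪ b.2)

lemma cov_middle {l₁ l₂ : List (Blk α)} {b : Blk α} :
    ∀ {S : Finset α}, Cov (l₁ ++ b :: l₂) S →
      ∃ T, Cov (l₁ ++ l₂) T ∧ (S = T ∨ S = T ∪ b.1 ∨ S = T ∪ b.2) := by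
  induction l₁ with
  | nil =>
    intro S h
    cases h with
    | skip _ _ _ h => exact ⟨S, h, Or.inl rfl⟩
    | left _ _ S₀ h => exact ⟨S₀, h, Or.inr (Or.inl rfl)⟩
    | right _ _ S₀ h => exact ⟨S₀, h, Or.inr (Or.inr rfl)⟩
  | cons a l₁ ih =>
    intro S h
    cases h with
    | skip _ _ _ h =>
      obtain ⟨T, hT, hc⟩ := ih h
      exact ⟨T, Cov.skip _ _ _ hT, hc⟩
    | left _ _ S₀ h =>
      obtain ⟨T, hT, hc⟩ := ih h
      refine ⟨T ∪ a.1, Cov.left _ _ _ hT, ?_⟩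
      rcases hc with rfl | rfl | rfl
      · exact Or.inl rfl
      · exact Or.inr (Or.inl (Finset.union_right_comm _ _ _))
      · exact Or.inr (Or.inr (Finset.union_right_comm _ _ _))
    | right _ _ S₀ h =>
      obtain ⟨T, hT, hc⟩ := ih h
      refine ⟨T ∪ a.2, Cov.right _ _ _ hT, ?_⟩
      rcases hc with rfl | rfl | rfl
      · exact Or.inl rfl
      · exact Or.inr (Or.inl (Finset.union_right_comm _ _ _))
      · exact Or.inr (Or.inr (Finset.union_right_comm _ _ _))

lemma cov_map (π : α → α) {l : List (Blk α)} {S : Finset α} (h : Cov l S) :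
    Cov (l.map (fun p => (p.1.image π, p.2.image π))) (S.image π) := by
  induction h with
  | nil => simpa using Cov.nil
  | skip b l S _ ih => exact Cov.skip _ _ _ ih
  | left b l S _ ih =>
    rw [Finset.image_union]
    exact Cov.left (b.1.image π, b.2.image π) _ _ ih
  | right b l S _ ih =>
    rw [Finset.image_union]
    exact Cov.right (b.1.image π, b.2.image π) _ _ ih

lemma cov_host {l : List (Blk α)} {S : Finset α} (h : Cov l S) :
    ∀ t ∈ S, ∃ p ∈ l, (t ∈ p.1 ∧ p.1 ⊆ S) ∨ (t ∈ p.2 ∧ p.2 ⊆ S) := by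
  induction h with
  | nil => intro t ht; exact absurd ht (Finset.notMem_empty t)
  | skip b l S _ ih =>
    intro t ht
    obtain ⟨p, hp, hc⟩ := ih t ht
    exact ⟨p, List.mem_cons_of_mem _ hp, hc⟩
  | left b l S _ ih =>
    intro t ht
    rcases Finset.mem_union.mp ht with h1 | h2
    · obtain ⟨p, hp, hc⟩ := ih t h1
      refine ⟨p, List.mem_cons_of_mem _ hp, ?_⟩
      rcases hc with ⟨h3, h4⟩ | ⟨h3, h4⟩
      · exact Or.inl ⟨h3, h4.trans Finset.subset_union_left⟩
      · exact Or.inr ⟨h3, h4.trans Finset.subset_union_left⟩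
    · exact ⟨b, List.mem_cons_self, Or.inl ⟨h2, Finset.subset_union_right⟩⟩
  | right b l S _ ih =>
    intro t ht
    rcases Finset.mem_union.mp ht with h1 | h2
    · obtain ⟨p, hp, hc⟩ := ih t h1
      refine ⟨p, List.mem_cons_of_mem _ hp, ?_⟩
      rcases hc with ⟨h3, h4⟩ | ⟨h3, h4⟩
      · exact Or.inl ⟨h3, h4.trans Finset.subset_union_left⟩
      · exact Or.inr ⟨h3, h4.trans Finset.subset_union_left⟩
    · exact ⟨b, List.mem_cons_self, Or.inr ⟨h2, Finset.subset_union_right⟩⟩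

lemma cov_build : ∀ {m : ℕ} (g : Fin m → Blk α) (c : Fin m → Finset α),
    (∀ j, c j = ∅ ∨ c j = (g j).1 ∨ c j = (g j).2) →
    Cov (List.ofFn g) (Finset.univ.biUnion c) := by
  intro m
  induction m with
  | zero =>
    intro g c _
    have h0 : (Finset.univ : Finset (Fin 0)).biUnion c = ∅ := by simp
    rw [h0, List.ofFn_zero]
    exact Cov.nil
  | succ m ih =>
    intro g c hc
    have hsplit : (Finset.univ : Finset (Fin (m+1))).biUnion c
        = (Finset.univ.biUnion (fun i : Fin m => c i.succ)) ∪ c 0 := by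
      ext a
      simp only [Finset.mem_biUnion, Finset.mem_union, Finset.mem_univ, true_and]
      constructor
      · rintro ⟨i, hi⟩
        have hex : ∃ i : Fin (m+1), a ∈ c i := ⟨i, hi⟩
        rcases Fin.exists_fin_succ.mp hex with h | ⟨i', hi'⟩
        · exact Or.inr h
        · exact Or.inl ⟨i', hi'⟩
      · rintro (⟨i, hi⟩ | h)
        · exact ⟨i.succ, hi⟩
        · exact ⟨0, h⟩
    rw [hsplit, List.ofFn_succ]
    have htail := ih (fun i => g i.succ) (fun i => c i.succ) (fun i => hc i.succ)
    rcases hc 0 with h0 | h0 | h0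
    · rw [h0, Finset.union_empty]
      exact Cov.skip _ _ _ htail
    · rw [h0]
      exact Cov.left _ _ _ htail
    · rw [h0]
      exact Cov.right _ _ _ htail

/-- The key combinatorial lemma: if every subset of `U` is coverable by the block list `l`
(one literal per block), then `|U| ≤ |l|`. -/
lemma cover_card_le : ∀ (n : ℕ) (l : List (Blk α)) (U : Finset α),
    l.length ≤ n → (∀ S ⊆ U, Cov l S) → U.card ≤ l.length := by
  intro n
  induction n with
  | zero =>
    intro l U hlen hc
    have hl : l = [] := List.length_eq_zero_iff.mp (Nat.le_zero.mp hlen)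
    subst hl
    have hU := hc U (Finset.Subset.refl U)
    cases hU
    simp
  | succ n IH =>
    intro l U hlen hc
    classical
    by_cases hP : ∃ p ∈ l, ∃ x ∈ U, ∃ y ∈ U, x ≠ y ∧ p.1 = {x} ∧ p.2 = {y}
    · -- contraction case
      obtain ⟨p, hpl, x, hxU, y, hyU, hxy, hp1, hp2⟩ := hP
      obtain ⟨l₁, l₂, rfl⟩ := List.append_of_mem hpl
      set π : α → α := fun z => if z = x then y else z with hπdef
      have hπx : π x = y := by simp [hπdef]
      have hπz : ∀ z, z ≠ x → π z = z := by
        intro z hz; simp [hπdef, hz]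
      have himg : ∀ T : Finset α, x ∉ T → T.image π = T := by
        intro T hxT
        rw [Finset.image_congr (g := id) ?_, Finset.image_id]
        intro z hz
        exact hπz z (fun h => hxT (h ▸ hz))
      set F : Blk α → Blk α := fun b => (b.1.image π, b.2.image π) with hFdef
      have hkey : ∀ S' ⊆ U.erase x, Cov ((l₁ ++ l₂).map F) S' := by
        intro S' hS'
        have hxS' : x ∉ S' := fun h => (Finset.mem_erase.mp (hS' h)).1 rfl
        have hS'U : S' ⊆ U := hS'.trans (Finset.erase_subset _ _)
        have himgS' : S'.image π = S' := himg S' hxS'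
        by_cases hyS : y ∈ S'
        · -- cover S' ∪ {x} in the original system and contract
          have hSU : insert x S' ⊆ U := by
            intro a ha
            rcases Finset.mem_insert.mp ha with rfl | ha'
            · exact hxU
            · exact hS'U ha'
          obtain ⟨T, hT, hcase⟩ := cov_middle (hc (insert x S') hSU)
          have himgeq : T.image π = S' := by
            have himgS : (insert x S').image π = S' := by
              rw [Finset.image_insert, hπx, himgS']
              exact Finset.insert_eq_self.mpr hyS
            rcases hcase with hS | hS | hS
            · rw [← hS, himgS]
            · -- insert x S' = T ∪ {x}
              rw [hp1] at hS
              have hyT : y ∈ T := by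
                have hyS2 : y ∈ insert x S' := Finset.mem_insert_of_mem hyS
                rw [hS] at hyS2
                rcases Finset.mem_union.mp hyS2 with h | h
                · exact h
                · exact absurd (Finset.mem_singleton.mp h) (Ne.symm hxy)
              apply Finset.Subset.antisymm
              · intro a ha
                obtain ⟨z, hz, rfl⟩ := Finset.mem_image.mp ha
                have hzS : z ∈ insert x S' := by rw [hS]; exact Finset.mem_union_left _ hz
                have : π z ∈ (insert x S').image π := Finset.mem_image_of_mem _ hzS
                rwa [himgS] at this
              · intro a ha
                have : a ∈ (insert x S').image π := by rw [himgS]; exact ha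
                obtain ⟨z, hz, rfl⟩ := Finset.mem_image.mp this
                rw [hS] at hz
                rcases Finset.mem_union.mp hz with h | h
                · exact Finset.mem_image_of_mem _ h
                · have hzx : z = x := Finset.mem_singleton.mp h
                  subst hzx
                  rw [hπx, ← hπz y hxy.symm]
                  exact Finset.mem_image_of_mem _ hyT
            · -- insert x S' = T ∪ {y}
              rw [hp2] at hS
              have hxT : x ∈ T := by
                have hxS2 : x ∈ insert x S' := Finset.mem_insert_self x S'
                rw [hS] at hxS2
                rcases Finset.mem_union.mp hxS2 with h | h
                · exact h
                · exact absurd (Finset.mem_singleton.mp h) hxy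
              apply Finset.Subset.antisymm
              · intro a ha
                obtain ⟨z, hz, rfl⟩ := Finset.mem_image.mp ha
                have hzS : z ∈ insert x S' := by rw [hS]; exact Finset.mem_union_left _ hz
                have : π z ∈ (insert x S').image π := Finset.mem_image_of_mem _ hzS
                rwa [himgS] at this
              · intro a ha
                have : a ∈ (insert x S').image π := by rw [himgS]; exact ha
                obtain ⟨z, hz, rfl⟩ := Finset.mem_image.mp this
                rw [hS] at hz
                rcases Finset.mem_union.mp hz with h | h
                · exact Finset.mem_image_of_mem _ h
                · have hzy : z = y := Finset.mem_singleton.mp h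
                  subst hzy
                  rw [hπz z hxy.symm, ← hπx]
                  exact Finset.mem_image_of_mem _ hxT
          have := cov_map π hT
          rwa [himgeq] at this
        · -- y ∉ S' : cover S' directly, block p is unused
          obtain ⟨T, hT, hcase⟩ := cov_middle (hc S' hS'U)
          have hTS : S' = T := by
            rcases hcase with h | h | h
            · exact h
            · rw [hp1] at h
              exfalso; apply hxS'
              rw [h]
              exact Finset.mem_union_right _ (Finset.mem_singleton_self x)
            · rw [hp2] at h
              exfalso; apply hyS
              rw [h]
              exact Finset.mem_union_right _ (Finset.mem_singleton_self y)
          have := cov_map π hT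
          rw [← hTS, himgS'] at this
          exact this
      have hlen' : ((l₁ ++ l₂).map F).length ≤ n := by
        have h1 : (l₁ ++ p :: l₂).length = l₁.length + l₂.length + 1 := by
          simp [List.length_append]; omega
        have h2 : ((l₁ ++ l₂).map F).length = l₁.length + l₂.length := by
          simp [List.length_append]
        omega
      have hres := IH ((l₁ ++ l₂).map F) (U.erase x) hlen' hkey
      have hcard : (U.erase x).card = U.card - 1 := Finset.card_erase_of_mem hxU
      have hpos : 1 ≤ U.card := Finset.card_pos.mpr ⟨x, hxU⟩
      have h2 : ((l₁ ++ l₂).map F).length = l₁.length + l₂.length := by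
        simp [List.length_append]
      have h1 : (l₁ ++ p :: l₂).length = l₁.length + l₂.length + 1 := by
        simp [List.length_append]; omega
      omega
    · -- no pair block: the singleton hosts give an injection
      have hhost : ∀ t, ∃ p : Blk α, t ∈ U → p ∈ l ∧ (p.1 = {t} ∨ p.2 = {t}) := by
        intro t
        by_cases ht : t ∈ U
        · have hcov := hc {t} (Finset.singleton_subset_iff.mpr ht)
          obtain ⟨p, hp, hcase⟩ := cov_host hcov t (Finset.mem_singleton_self t)
          refine ⟨p, fun _ => ⟨hp, ?_⟩⟩
          rcases hcase with ⟨h1, h2⟩ | ⟨h1, h2⟩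
          · exact Or.inl (Finset.Subset.antisymm h2 (Finset.singleton_subset_iff.mpr h1))
          · exact Or.inr (Finset.Subset.antisymm h2 (Finset.singleton_subset_iff.mpr h1))
        · exact ⟨(∅, ∅), fun h => absurd h ht⟩
      choose φ hφ using hhost
      have hinj : Set.InjOn φ (U : Set α) := by
        intro t ht s hs heq
        by_contra hne
        have h1 := (hφ t ht).2
        have h2 := (hφ s hs).2
        rw [heq] at h1
        rcases h1 with h1 | h1 <;> rcases h2 with h2 | h2
        · exact hne (Finset.singleton_injective (h1.symm.trans h2))
        · exact hP ⟨φ s, (hφ s hs).1, t, ht, s, hs, hne, h1, h2⟩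
        · exact hP ⟨φ s, (hφ s hs).1, s, hs, t, ht, fun h => hne h.symm, h2, h1⟩
        · exact hne (Finset.singleton_injective (h1.symm.trans h2))
      have hmaps : ∀ t ∈ U, φ t ∈ l.toFinset := by
        intro t ht
        exact List.mem_toFinset.mpr (hφ t ht).1
      calc U.card ≤ l.toFinset.card := Finset.card_le_card_of_injOn φ hmaps hinj
        _ ≤ l.length := List.toFinset_card_le l

lemma Tcell_star (v : BB) : Tcell v BB.star = true := by
  cases v <;> rfl

lemma Tcell_star_left (v : BB) : Tcell BB.star v = true := by
  cases v <;> rfl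

/-- Lower bound: an implementation with reject-free patterns θ forces `q ≤ n`. -/
lemma lower_bound {q n : ℕ} (u : Fin q → Fin n → BB) (θ : (Fin q → Bool) → Fin n → BB)
    (hB : ∀ f : Fin q → Bool, ∀ j, θ f j ∈ Bstar)
    (heq : ∀ f : Fin q → Bool, ∀ x, f x = Tword (u x) (θ f)) : q ≤ n := by
  classical
  set g : Fin n → Blk (Fin q) := fun j =>
    (Finset.univ.filter (fun x => Tcell (u x j) BB.zero = false),
     Finset.univ.filter (fun x => Tcell (u x j) BB.one = false)) with hgdef
  have hcov : ∀ S ⊆ (Finset.univ : Finset (Fin q)), Cov (List.ofFn g) S := by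
    intro S _
    set f : Fin q → Bool := fun x => decide (x ∉ S) with hfdef
    set c : Fin n → Finset (Fin q) := fun j =>
      if θ f j = BB.zero then (g j).1 else if θ f j = BB.one then (g j).2 else ∅ with hcdef
    have hchoice : ∀ j, c j = ∅ ∨ c j = (g j).1 ∨ c j = (g j).2 := by
      intro j
      by_cases h0 : θ f j = BB.zero
      · exact Or.inr (Or.inl (by simp only [hcdef, if_pos h0]))
      · by_cases h1 : θ f j = BB.one
        · exact Or.inr (Or.inr (by simp only [hcdef, if_neg h0, if_pos h1]))
        · exact Or.inl (by simp only [hcdef, if_neg h0, if_neg h1])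
    have hbi : Finset.univ.biUnion c = S := by
      ext a
      simp only [Finset.mem_biUnion, Finset.mem_univ, true_and]
      constructor
      · rintro ⟨j, hj⟩
        by_contra haS
        have hfa : f a = true := by
          rw [hfdef]; exact decide_eq_true haS
        have htw : Tword (u a) (θ f) = true := by
          rw [← heq f a]; exact hfa
        have hall : ∀ j', Tcell (u a j') (θ f j') = true := by
          have := htw
          rw [Tword, decide_eq_true_eq] at this
          exact this
        simp only [hcdef] at hj
        by_cases h0 : θ f j = BB.zero
        · rw [if_pos h0] at hj
          simp only [hgdef, Finset.mem_filter, Finset.mem_univ, true_and] at hj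
          have hT := hall j
          rw [h0] at hT
          rw [hT] at hj
          exact Bool.noConfusion hj
        · rw [if_neg h0] at hj
          by_cases h1 : θ f j = BB.one
          · rw [if_pos h1] at hj
            simp only [hgdef, Finset.mem_filter, Finset.mem_univ, true_and] at hj
            have hT := hall j
            rw [h1] at hT
            rw [hT] at hj
            exact Bool.noConfusion hj
          · rw [if_neg h1] at hj
            exact absurd hj (Finset.notMem_empty a)
      · intro haS
        have hfa : f a = false := by
          rw [hfdef]
          simp only [decide_eq_false_iff_not, not_not]
          exact haS
        have htw : Tword (u a) (θ f) = false := by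
          rw [← heq f a]; exact hfa
        rw [Tword] at htw
        rw [decide_eq_false_iff_not] at htw
        push_neg at htw
        obtain ⟨j, hj⟩ := htw
        have hjf : Tcell (u a j) (θ f j) = false := by
          cases h : Tcell (u a j) (θ f j)
          · rfl
          · exact absurd h hj
        refine ⟨j, ?_⟩
        have hθ : θ f j ∈ Bstar := hB f j
        rcases hθ with h0 | h1 | hstar
        · simp only [hcdef, if_pos h0, hgdef, Finset.mem_filter, Finset.mem_univ, true_and]
          rw [← h0]; exact hjf
        · have hne0 : θ f j ≠ BB.zero := by rw [h1]; intro hcon; exact BB.noConfusion hcon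
          simp only [hcdef, if_neg hne0, if_pos h1, hgdef, Finset.mem_filter,
            Finset.mem_univ, true_and]
          rw [← h1]; exact hjf
        · exfalso
          have hst : θ f j = BB.star := hstar
          rw [hst, Tcell_star] at hjf
          exact Bool.noConfusion hjf
    rw [← hbi]
    exact cov_build g c hchoice
  have := cover_card_le (List.ofFn g).length (List.ofFn g) Finset.univ le_rfl hcov
  simpa [List.length_ofFn] using this

end FsetAux

section UpperBounds

open FsetAux

lemma implementable_mono {A A' B B' : Set BB} {n q : ℕ} {Φ : Set (Fin q → Bool)}
    (h : Implementable A B n q Φ) (hA : A ⊆ A') (hB : B ⊆ B') :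
    Implementable A' B' n q Φ := by
  obtain ⟨u, θ, h1, h2, h3⟩ := h
  exact ⟨u, θ, fun x j => hA (h1 x j), fun f hf j => hB (h2 f hf j), h3⟩

lemma zero_mem_Bcirc : BB.zero ∈ Bcirc := Or.inl rfl
lemma one_mem_Bcirc : BB.one ∈ Bcirc := Or.inr rfl
lemma Bcirc_subset_Bstar : Bcirc ⊆ Bstar := by
  intro v hv
  rcases hv with h | h
  · exact Or.inl h
  · exact Or.inr (Or.inl h)
lemma subset_Bdot (A : Set BB) : A ⊆ Bdot := fun v _ => Set.mem_univ v

/-- Scenario (∗◦): inputs over 𝔹∗, patterns over 𝔹. -/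
lemma upper_star_circ {q n : ℕ} (h : q ≤ n) :
    Implementable Bstar Bcirc n q Set.univ := by
  classical
  refine ⟨fun x j => if (j : ℕ) = (x : ℕ) then BB.one else BB.star,
    fun f j => if h' : (j : ℕ) < q then (if f ⟨j, h'⟩ then BB.one else BB.zero) else BB.zero,
    ?_, ?_, ?_⟩
  · intro x j
    dsimp only
    split
    · exact Or.inr (Or.inl rfl)
    · exact Or.inr (Or.inr rfl)
  · intro f _ j
    dsimp only
    split
    · split
      · exact one_mem_Bcirc
      · exact zero_mem_Bcirc
    · exact zero_mem_Bcirc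
  · intro f _ x
    by_cases hfx : f x = true
    · rw [hfx]
      symm
      rw [Tword, decide_eq_true_eq]
      intro j
      dsimp only
      by_cases hj : (j : ℕ) = (x : ℕ)
      · rw [if_pos hj]
        have hq : (j : ℕ) < q := hj ▸ x.isLt
        rw [dif_pos hq]
        have hx : (⟨(j : ℕ), hq⟩ : Fin q) = x := Fin.ext hj
        rw [hx, hfx]
        rfl
      · rw [if_neg hj]
        exact FsetAux.Tcell_star_left _
    · have hfx' : f x = false := by
        cases h : f x
        · rfl
        · exact absurd h hfx
      rw [hfx']
      symm
      rw [Tword]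
      apply decide_eq_false
      intro hall
      have hq : (x : ℕ) < n := lt_of_lt_of_le x.isLt h
      have := hall ⟨(x : ℕ), hq⟩
      dsimp only at this
      rw [if_pos rfl, dif_pos x.isLt] at this
      have hx : (⟨(x : ℕ), x.isLt⟩ : Fin q) = x := Fin.ext rfl
      rw [hx, hfx'] at this
      exact (by decide : ¬ (Tcell BB.one BB.zero = true)) this

/-- Scenario (◦∗): inputs over 𝔹, patterns over 𝔹∗. -/
lemma upper_circ_star {q n : ℕ} (h : q ≤ n) :
    Implementable Bcirc Bstar n q Set.univ := by
  classical
  refine ⟨fun x j => if (j : ℕ) = (x : ℕ) then BB.one else BB.zero,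
    fun f j => if h' : (j : ℕ) < q then (if f ⟨j, h'⟩ then BB.star else BB.zero) else BB.star,
    ?_, ?_, ?_⟩
  · intro x j
    dsimp only
    split
    · exact one_mem_Bcirc
    · exact zero_mem_Bcirc
  · intro f _ j
    dsimp only
    split
    · split
      · exact Or.inr (Or.inr rfl)
      · exact Or.inl rfl
    · exact Or.inr (Or.inr rfl)
  · intro f _ x
    by_cases hfx : f x = true
    · rw [hfx]
      symm
      rw [Tword, decide_eq_true_eq]
      intro j
      dsimp only
      by_cases hj : (j : ℕ) = (x : ℕ)
      · rw [if_pos hj]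
        have hq : (j : ℕ) < q := hj ▸ x.isLt
        rw [dif_pos hq]
        have hx : (⟨(j : ℕ), hq⟩ : Fin q) = x := Fin.ext hj
        rw [hx, hfx]
        exact Tcell_star _
      · rw [if_neg hj]
        by_cases hq : (j : ℕ) < q
        · rw [dif_pos hq]
          split
          · exact Tcell_star _
          · rfl
        · rw [dif_neg hq]
          exact Tcell_star _
    · have hfx' : f x = false := by
        cases h : f x
        · rfl
        · exact absurd h hfx
      rw [hfx']
      symm
      rw [Tword]
      apply decide_eq_false
      intro hall
      have hq : (x : ℕ) < n := lt_of_lt_of_le x.isLt h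
      have := hall ⟨(x : ℕ), hq⟩
      dsimp only at this
      rw [if_pos rfl, dif_pos x.isLt] at this
      have hx : (⟨(x : ℕ), x.isLt⟩ : Fin q) = x := Fin.ext rfl
      rw [hx, hfx'] at this
      exact (by decide : ¬ (Tcell BB.one BB.zero = true)) this

end UpperBounds

theorem Fset_implementable_four_scenarios (q n : ℕ) (hq : 2 ≤ q) (hn : 1 ≤ n) :
    (Implementable Bstar Bcirc n q Set.univ ↔ q ≤ n) ∧
    (Implementable Bcirc Bstar n q Set.univ ↔ q ≤ n) ∧
    (Implementable Bstar Bstar n q Set.univ ↔ q ≤ n) ∧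
    (Implementable Bdot Bstar n q Set.univ ↔ q ≤ n) := by
  have hlow : ∀ (A B : Set BB), B ⊆ Bstar →
      Implementable A B n q Set.univ → q ≤ n := by
    intro A B hBsub h
    obtain ⟨u, θ, _, h2, h3⟩ := h
    exact FsetAux.lower_bound u θ
      (fun f j => hBsub (h2 f (Set.mem_univ f) j))
      (fun f x => h3 f (Set.mem_univ f) x)
  refine ⟨⟨fun h => hlow _ _ Bcirc_subset_Bstar h, fun h => upper_star_circ h⟩,
    ⟨fun h => hlow _ _ (fun v hv => hv) h, fun h => upper_circ_star h⟩,
    ⟨fun h => hlow _ _ (fun v hv => hv) h,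
      fun h => implementable_mono (upper_circ_star h) Bcirc_subset_Bstar (fun v hv => hv)⟩,
    ⟨fun h => hlow _ _ (fun v hv => hv) h,
      fun h => implementable_mono (upper_circ_star h) (subset_Bdot _) (fun v hv => hv)⟩⟩
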